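/- Weak quasitriangle inequality for relative excess: if A, B, C ⊆ ℝⁿ with B, C nonempty and x ∈ closure(B), then d^{x,r}(A,C) ≤ d^{x,r}(A,B) + 2 d^{x,2r}(closure(B), C) for all r > 0. -/

import Mathlib

open Metric Set Filter Topology Pointwise

noncomputable section

/-- Excess of `A` over `B`: `sup_{a ∈ A} inf_{b ∈ B} |a - b|` (extended-real valued). -/
def ex {n : ℕ} (A B : Set (EuclideanSpace ℝ (Fin n))) : ENNReal :=
  ⨆ a ∈ A, EMetric.infEdist a B

/-- Relative excess of `A` in the closed ball `B(x,r)` over `B`. -/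
def relEx {n : ℕ} (x : EuclideanSpace ℝ (Fin n)) (r : ℝ)
    (A B : Set (EuclideanSpace ℝ (Fin n))) : ℝ :=
  (ex (A ∩ closedBall x r) B).toReal / r

/-- Relative Walkup–Wets distance in `B(x,r)`. -/
def WW {n : ℕ} (x : EuclideanSpace ℝ (Fin n)) (r : ℝ)
    (A B : Set (EuclideanSpace ℝ (Fin n))) : ℝ :=
  max (relEx x r A B) (relEx x r B A)

/-- Weak quasitriangle inequality for the relative excess. -/
theorem relEx_weak_quasitriangle {n : ℕ} (A B C : Set (EuclideanSpace ℝ (Fin n)))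
    (hB : B.Nonempty) (hC : C.Nonempty) (x : EuclideanSpace ℝ (Fin n))
    (hx : x ∈ closure B) (r : ℝ) (hr : 0 < r) :
    relEx x r A C ≤ relEx x r A B + 2 * relEx x (2 * r) (closure B) C := by
  obtain ⟨c, hc⟩ := hC
  have hBc : (closure B).Nonempty := hB.closure
  set E1 := ex (A ∩ closedBall x r) C with hE1
  set E2 := ex (A ∩ closedBall x r) B with hE2
  set E3 := ex (closure B ∩ closedBall x (2 * r)) C with hE3
  have h2top : E2 ≤ ENNReal.ofReal r := by
    refine iSup₂_le fun a ha => ?_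
    calc EMetric.infEdist a B = EMetric.infEdist a (closure B) :=
          (EMetric.infEdist_closure).symm
      _ ≤ edist a x := EMetric.infEdist_le_edist_of_mem hx
      _ = ENNReal.ofReal (dist a x) := edist_dist _ _
      _ ≤ ENNReal.ofReal r := ENNReal.ofReal_le_ofReal ha.2
  have h3top : E3 ≤ ENNReal.ofReal (2 * r + dist x c) := by
    refine iSup₂_le fun b hb => ?_
    calc EMetric.infEdist b C ≤ edist b c := EMetric.infEdist_le_edist_of_mem hc
      _ = ENNReal.ofReal (dist b c) := edist_dist _ _
      _ ≤ ENNReal.ofReal (2 * r + dist x c) := by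
          refine ENNReal.ofReal_le_ofReal ?_
          calc dist b c ≤ dist b x + dist x c := dist_triangle _ _ _
            _ ≤ 2 * r + dist x c := by
                have := hb.2
                simp only [mem_closedBall] at this
                linarith
  have h2ne : E2 ≠ ⊤ := ne_top_of_le_ne_top ENNReal.ofReal_ne_top h2top
  have h3ne : E3 ≠ ⊤ := ne_top_of_le_ne_top ENNReal.ofReal_ne_top h3top
  have hkey : E1 ≤ E2 + E3 := by
    refine iSup₂_le fun a ha => ?_
    obtain ⟨b, hbB, hb⟩ := isClosed_closure.exists_infDist_eq_dist hBc a
    have hdb : dist a b ≤ dist a x := by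
      rw [← hb]; exact infDist_le_dist_of_mem hx
    have hax : dist a x ≤ r := ha.2
    have hbx : b ∈ closedBall x (2 * r) := by
      simp only [mem_closedBall]
      calc dist b x ≤ dist b a + dist a x := dist_triangle _ _ _
        _ ≤ 2 * r := by rw [dist_comm b a]; linarith
    have hfin : EMetric.infEdist a (closure B) ≠ ⊤ :=
      ne_top_of_le_ne_top (by rw [edist_dist]; exact ENNReal.ofReal_ne_top)
        (EMetric.infEdist_le_edist_of_mem hx)
    have heab : edist a b = EMetric.infEdist a B := by
      rw [edist_dist, ← hb, infDist, ENNReal.ofReal_toReal (a := Metric.infEDist a (closure B)) hfin, Metric.infEDist_closure]; rfl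
    calc EMetric.infEdist a C
        ≤ EMetric.infEdist b C + edist a b := EMetric.infEdist_le_infEdist_add_edist
      _ = edist a b + EMetric.infEdist b C := add_comm _ _
      _ ≤ E2 + E3 := by
          gcongr
          · rw [heab]; exact le_iSup₂ (f := fun a _ => EMetric.infEdist a B) a ha
          · exact le_iSup₂ (f := fun b _ => EMetric.infEdist b C) b ⟨hbB, hbx⟩
  have h1 : E1.toReal ≤ E2.toReal + E3.toReal := by
    rw [← ENNReal.toReal_add h2ne h3ne]
    exact ENNReal.toReal_mono (ENNReal.add_ne_top.2 ⟨h2ne, h3ne⟩) hkey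
  have harith : 2 * (E3.toReal / (2 * r)) = E3.toReal / r := by
    field_simp
  unfold relEx
  rw [← hE1, ← hE2, ← hE3, harith, ← add_div]
  gcongr
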